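/- Let M_0 = ⟨1/p : p prime⟩ ⊆ Q_{≥0}, let G be the difference group of M_0, and let M = M_0 ∪ {g ∈ G : g ≥ 1}. Then M is an additive submonoid of Q_{≥0} whose set of atoms is {1/p : p prime}, M is almost atomic, but M is not nearly atomic. -/

import Mathlib

/-- `x` is invertible within the subset `S` of the ambient monoid. -/
def SUnit {A : Type*} [AddCommMonoid A] (S : Set A) (x : A) : Prop := ∃ y ∈ S, x + y = 0

/-- `a` is an atom of the subset (submonoid) `S`: it is non-invertible in `S` and
cannot be written as a sum of two non-invertible elements of `S`. -/
def SAtom {A : Type*} [AddCommMonoid A] (S : Set A) (a : A) : Prop :=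
  a ∈ S ∧ ¬ SUnit S a ∧ ∀ b ∈ S, ∀ c ∈ S, a = b + c → SUnit S b ∨ SUnit S c

/-- `x` is an atomic element of `S`: invertible in `S` or a finite sum of atoms of `S`. -/
def SAtomicElem {A : Type*} [AddCommMonoid A] (S : Set A) (x : A) : Prop :=
  SUnit S x ∨ ∃ l : Multiset A, (∀ a ∈ l, SAtom S a) ∧ l.sum = x

/-- The subset (submonoid) `S` is atomic. -/
def SAtomic {A : Type*} [AddCommMonoid A] (S : Set A) : Prop :=
  ∀ x ∈ S, SAtomicElem S x

/-- The Puiseux monoid generated by the reciprocals of the primes. -/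
def M017 : Set ℚ :=
  (AddSubmonoid.closure {x : ℚ | ∃ p : ℕ, p.Prime ∧ x = 1 / p} : Set ℚ)

/-- The difference group of `M₀`. -/
def G17 : Set ℚ := {x : ℚ | ∃ u ∈ M017, ∃ v ∈ M017, x = u - v}

/-- The monoid `M = M₀ ∪ G_{≥1}`. -/
def M17 : Set ℚ := M017 ∪ {x ∈ G17 | 1 ≤ x}

namespace Aux17

def PR : Set ℚ := {x : ℚ | ∃ p : ℕ, p.Prime ∧ x = 1 / p}

def fr (p : ℕ) : ℚ := 1 - 1/(p:ℚ)



lemma pr_pos {x : ℚ} (hx : x ∈ PR) : 0 < x := by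
  obtain ⟨p, hp, rfl⟩ := hx
  have : (0:ℚ) < p := by exact_mod_cast hp.pos
  positivity

lemma mem_M0_iff {x : ℚ} : x ∈ M017 ↔ ∃ l : Multiset ℚ, (∀ y ∈ l, y ∈ PR) ∧ l.sum = x := by
  constructor
  · exact fun h => AddSubmonoid.exists_multiset_of_mem_closure h
  · rintro ⟨l, hl, rfl⟩
    exact AddSubmonoid.multiset_sum_mem _ _ fun y hy => AddSubmonoid.subset_closure (hl y hy)

lemma M0_zero : (0:ℚ) ∈ M017 := AddSubmonoid.zero_mem _

lemma M0_add {x y : ℚ} (hx : x ∈ M017) (hy : y ∈ M017) : x + y ∈ M017 :=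
  AddSubmonoid.add_mem _ hx hy

lemma M0_nonneg {x : ℚ} (hx : x ∈ M017) : 0 ≤ x := by
  obtain ⟨l, hl, rfl⟩ := mem_M0_iff.1 hx
  exact Multiset.sum_nonneg fun y hy => (pr_pos (hl y hy)).le

lemma M0_pr {x : ℚ} (hx : x ∈ PR) : x ∈ M017 := AddSubmonoid.subset_closure hx

lemma one_div_mem {p : ℕ} (hp : p.Prime) : (1/(p:ℚ)) ∈ M017 := M0_pr ⟨p, hp, rfl⟩

lemma M0_nat (n : ℕ) : (n:ℚ) ∈ M017 := by
  have h : ((2*n) • (1/2 : ℚ)) ∈ M017 :=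
    AddSubmonoid.nsmul_mem _ (one_div_mem Nat.prime_two) _
  have e : ((2*n) • (1/2 : ℚ)) = (n:ℚ) := by
    rw [nsmul_eq_mul]; push_cast; ring
  rwa [e] at h

lemma sub_one_div_mem {p : ℕ} (hp : p.Prime) : (1 - 1/(p:ℚ)) ∈ M017 := by
  have h : ((p-1) • (1/(p:ℚ))) ∈ M017 := AddSubmonoid.nsmul_mem _ (one_div_mem hp) _
  have hp0 : (p:ℚ) ≠ 0 := by exact_mod_cast hp.pos.ne'
  have e : ((p-1) • (1/(p:ℚ))) = 1 - 1/(p:ℚ) := by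
    rw [nsmul_eq_mul]
    have : ((p-1 : ℕ) : ℚ) = (p:ℚ) - 1 := by
      push_cast [Nat.cast_sub hp.one_lt.le]; ring
    rw [this]; field_simp
  rwa [e] at h





-- G lemmas
lemma G_of {u v : ℚ} (hu : u ∈ M017) (hv : v ∈ M017) : u - v ∈ G17 := ⟨u, hu, v, hv, rfl⟩

lemma M0_sub_G {x : ℚ} (hx : x ∈ M017) : x ∈ G17 := ⟨x, hx, 0, M0_zero, by ring⟩

lemma G_add {x y : ℚ} (hx : x ∈ G17) (hy : y ∈ G17) : x + y ∈ G17 := by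
  obtain ⟨u1, hu1, v1, hv1, rfl⟩ := hx
  obtain ⟨u2, hu2, v2, hv2, rfl⟩ := hy
  exact ⟨u1 + u2, M0_add hu1 hu2, v1 + v2, M0_add hv1 hv2, by ring⟩

lemma G_sub_M0 {x u : ℚ} (hx : x ∈ G17) (hu : u ∈ M017) : x - u ∈ G17 := by
  obtain ⟨u1, hu1, v1, hv1, rfl⟩ := hx
  exact ⟨u1, hu1, v1 + u, M0_add hv1 hu, by ring⟩

-- M17 lemmas
lemma M0_sub_M17 {x : ℚ} (hx : x ∈ M017) : x ∈ M17 := Or.inl hx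

lemma G_ge1_mem {x : ℚ} (hx : x ∈ G17) (h1 : 1 ≤ x) : x ∈ M17 := Or.inr ⟨hx, h1⟩

lemma M17_zero : (0:ℚ) ∈ M17 := Or.inl M0_zero

lemma M17_nonneg {x : ℚ} (hx : x ∈ M17) : 0 ≤ x := by
  rcases hx with h | ⟨_, h1⟩
  · exact M0_nonneg h
  · linarith

lemma M17_add {x y : ℚ} (hx : x ∈ M17) (hy : y ∈ M17) : x + y ∈ M17 := by
  rcases hx with hx | ⟨hxG, hx1⟩ <;> rcases hy with hy | ⟨hyG, hy1⟩
  · exact Or.inl (M0_add hx hy)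
  · exact Or.inr ⟨G_add (M0_sub_G hx) hyG, by have := M0_nonneg hx; linarith⟩
  · exact Or.inr ⟨G_add hxG (M0_sub_G hy), by have := M0_nonneg hy; linarith⟩
  · exact Or.inr ⟨G_add hxG hyG, by linarith⟩

-- SUnit
lemma sunit_zero : SUnit M17 0 := ⟨0, M17_zero, by ring⟩

lemma sunit_iff {x : ℚ} (hx : 0 ≤ x) : SUnit M17 x ↔ x = 0 := by
  constructor
  · rintro ⟨y, hy, h⟩
    have := M17_nonneg hy
    linarith
  · rintro rfl; exact sunit_zero

-- denominator lemmas
lemma den_add_not_dvd {p : ℕ} (hp : p.Prime) {x y : ℚ} (hx : ¬ p ∣ x.den)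
    (hy : ¬ p ∣ y.den) : ¬ p ∣ (x+y).den := fun h => by
  rcases (Nat.Prime.dvd_mul hp).1 (h.trans (Rat.add_den_dvd x y)) with h' | h' <;> contradiction

lemma den_sum_not_dvd {p : ℕ} (hp : p.Prime) (l : Multiset ℚ)
    (h : ∀ x ∈ l, ¬ p ∣ x.den) : ¬ p ∣ l.sum.den := by
  induction l using Multiset.induction with
  | empty => simpa using hp.one_lt.ne'
  | cons a s ih =>
      rw [Multiset.sum_cons]
      exact den_add_not_dvd hp (h a (Multiset.mem_cons_self a s))
        (ih fun x hx => h x (Multiset.mem_cons_of_mem hx))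

lemma one_div_prime_den {p : ℕ} (hp : p.Prime) : ((1:ℚ)/p).den = p := by
  rw [one_div]
  exact Rat.inv_natCast_den_of_pos hp.pos

lemma one_div_inj {p q : ℕ} (hp : p.Prime) (hq : q.Prime) (h : (1:ℚ)/p = 1/q) : p = q := by
  have := one_div_prime_den hp
  rw [h, one_div_prime_den hq] at this
  exact this.symm

-- key divisibility extraction
lemma prime_dvd_of_eq {p : ℕ} (hp : p.Prime) {z : ℤ} {R : ℚ} (hR : ¬ p ∣ R.den)
    (h : (z:ℚ) = R * p) : (p:ℤ) ∣ z := by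
  have hden : ((R.den:ℚ)) ≠ 0 := by
    exact_mod_cast R.pos.ne'
  have hnum : (R.num : ℚ) = R * R.den := by
    nth_rewrite 2 [← Rat.num_div_den R]
    field_simp
  have h2 : (z * (R.den:ℤ) : ℚ) = ((R.num * p : ℤ) : ℚ) := by
    push_cast
    rw [h, hnum]; ring
  have h3 : z * (R.den:ℤ) = R.num * p := by exact_mod_cast h2
  have h4 : (p:ℤ) ∣ z * (R.den:ℤ) := ⟨R.num, by linarith⟩
  rcases (Int.Prime.dvd_mul' (by exact_mod_cast hp) h4) with h' | h'
  · exact h'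
  · exfalso; exact hR (by exact_mod_cast h')





-- sums of positive elements
lemma sum_pos_eq_zero {l : Multiset ℚ} (hl : ∀ y ∈ l, y ∈ PR) (h : l.sum = 0) : l = 0 := by
  by_contra h0
  obtain ⟨x, hx⟩ := Multiset.exists_mem_of_ne_zero h0
  have h1 : x ≤ l.sum := Multiset.single_le_sum (fun y hy => (pr_pos (hl y hy)).le) x hx
  have := pr_pos (hl x hx)
  rw [h] at h1; linarith

-- den of rest filter
lemma rest_den_not_dvd {p : ℕ} (hp : p.Prime) {l : Multiset ℚ} (hl : ∀ y ∈ l, y ∈ PR) :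
    ¬ p ∣ ((l.filter (fun y => ¬ y = (1/(p:ℚ)))).sum).den := by
  apply den_sum_not_dvd hp
  intro x hx
  obtain ⟨hxl, hxne⟩ := Multiset.mem_filter.1 hx
  obtain ⟨q, hq, rfl⟩ := hl x hxl
  rw [one_div_prime_den hq]
  intro hdvd
  exact hxne (by rw [(Nat.prime_dvd_prime_iff_eq hp hq).1 hdvd])

lemma count_smul_rest (l : Multiset ℚ) (x : ℚ) :
    l.sum = (l.count x : ℚ) * x + (l.filter (fun y => ¬ y = x)).sum := by
  nth_rewrite 1 [← Multiset.sum_filter_add_sum_filter_not (fun y => y = x)]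
  congr 1
  rw [Multiset.filter_eq', Multiset.sum_replicate, nsmul_eq_mul]

-- core: a multiset of prime reciprocals summing to 1/p is {1/p}
lemma sum_eq_one_div_prime {p : ℕ} (hp : p.Prime) {l : Multiset ℚ}
    (hl : ∀ y ∈ l, y ∈ PR) (hs : l.sum = 1 / p) : l = {(1/(p:ℚ))} := by
  classical
  have key := count_smul_rest l (1/(p:ℚ))
  rw [hs] at key
  have hp0 : (p:ℚ) ≠ 0 := by exact_mod_cast hp.pos.ne'
  have hppos : (0:ℚ) < p := by exact_mod_cast hp.pos
  have hrden := rest_den_not_dvd hp hl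
  have hz : ((1 - (l.count (1/(p:ℚ)) : ℤ) : ℤ) : ℚ)
      = (l.filter (fun y => ¬ y = (1/(p:ℚ)))).sum * p := by
    push_cast
    field_simp at key ⊢
    linarith
  have hdvd := prime_dvd_of_eq hp hrden hz
  have hr0 : 0 ≤ (l.filter (fun y => ¬ y = (1/(p:ℚ)))).sum := by
    apply Multiset.sum_nonneg
    intro y hy
    exact (pr_pos (hl y (Multiset.mem_of_mem_filter hy))).le
  have hn1 : (l.count (1/(p:ℚ)) : ℤ) ≤ 1 := by
    by_contra hc
    push_neg at hc
    have hneg : ((1 - (l.count (1/(p:ℚ)) : ℤ) : ℤ) : ℚ) < 0 := by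
      have : (1:ℤ) - (l.count (1/(p:ℚ)) : ℤ) < 0 := by omega
      exact_mod_cast this
    nlinarith [hz, hr0, hppos]
  have hn_eq : l.count (1/(p:ℚ)) = 1 := by
    have h2 : (2:ℤ) ≤ p := by exact_mod_cast hp.two_le
    have hge : (0:ℤ) ≤ (l.count (1/(p:ℚ)) : ℤ) := Int.natCast_nonneg _
    obtain ⟨j, hj⟩ := hdvd
    have hcase : (1:ℤ) - l.count (1/(p:ℚ)) = 0 ∨ (1:ℤ) - l.count (1/(p:ℚ)) = 1 := by omega
    rcases hcase with hcase | hcase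
    · have : (l.count (1/(p:ℚ)) : ℤ) = 1 := by omega
      exact_mod_cast this
    · exfalso
      rw [hcase] at hj
      have hpd : (p:ℤ) ∣ 1 := ⟨j, hj⟩
      have := Int.le_of_dvd one_pos hpd
      omega
  have hr_eq : (l.filter (fun y => ¬ y = (1/(p:ℚ)))).sum = 0 := by
    rw [hn_eq] at key
    push_cast at key
    linarith
  have hrest : l.filter (fun y => ¬ y = (1/(p:ℚ))) = 0 :=
    sum_pos_eq_zero (fun y hy => hl y (Multiset.mem_of_mem_filter hy)) hr_eq
  have hsplit := Multiset.filter_add_not (fun y => y = (1/(p:ℚ))) l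
  rw [Multiset.filter_eq', hrest, hn_eq] at hsplit
  rw [← hsplit]
  simp





lemma atom_one_div {p : ℕ} (hp : p.Prime) : SAtom M17 (1/(p:ℚ)) := by
  have hpos : (0:ℚ) < 1/(p:ℚ) := pr_pos ⟨p, hp, rfl⟩
  have hp2 : (2:ℚ) ≤ p := by exact_mod_cast hp.two_le
  refine ⟨M0_sub_M17 (one_div_mem hp), ?_, ?_⟩
  · rw [sunit_iff hpos.le]; exact hpos.ne'
  · intro b hb c hc habc
    have hb0 := M17_nonneg hb
    have hc0 := M17_nonneg hc
    have hlt1 : 1/(p:ℚ) < 1 := by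
      rw [div_lt_one (by linarith)]; linarith
    -- b, c < 1 so they are in M017
    have hbM : b ∈ M017 := by
      rcases hb with h | ⟨_, h1⟩
      · exact h
      · exfalso; linarith
    have hcM : c ∈ M017 := by
      rcases hc with h | ⟨_, h1⟩
      · exact h
      · exfalso; linarith
    obtain ⟨l1, hl1, hs1⟩ := mem_M0_iff.1 hbM
    obtain ⟨l2, hl2, hs2⟩ := mem_M0_iff.1 hcM
    have hsum : (l1 + l2).sum = 1/(p:ℚ) := by
      rw [Multiset.sum_add, hs1, hs2]; exact habc.symm
    have hmem : ∀ y ∈ l1 + l2, y ∈ PR := by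
      intro y hy
      rcases Multiset.mem_add.1 hy with h | h
      · exact hl1 y h
      · exact hl2 y h
    have hsing := sum_eq_one_div_prime hp hmem hsum
    have hcard : Multiset.card l1 + Multiset.card l2 = 1 := by
      have := congrArg Multiset.card hsing
      rw [Multiset.card_add] at this
      simpa using this
    rcases Nat.add_eq_one_iff.1 hcard with ⟨h1, _⟩ | ⟨_, h2⟩
    · left
      rw [sunit_iff hb0, ← hs1, Multiset.card_eq_zero.1 h1, Multiset.sum_zero]
    · right
      rw [sunit_iff hc0, ← hs2, Multiset.card_eq_zero.1 h2, Multiset.sum_zero]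

lemma atom_mem_pr {a : ℚ} (ha : SAtom M17 a) : a ∈ PR := by
  obtain ⟨haM, hnu, hdec⟩ := ha
  have ha0 : 0 ≤ a := M17_nonneg haM
  have hane : a ≠ 0 := by
    intro h; exact hnu ((sunit_iff ha0).2 h)
  rcases haM with hM0 | ⟨hG, h1⟩
  · obtain ⟨l, hl, hs⟩ := mem_M0_iff.1 hM0
    have hlne : l ≠ 0 := by
      intro h; rw [h, Multiset.sum_zero] at hs; exact hane hs.symm
    obtain ⟨x, hx⟩ := Multiset.exists_mem_of_ne_zero hlne
    obtain ⟨s, rfl⟩ := Multiset.exists_cons_of_mem hx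
    rw [Multiset.sum_cons] at hs
    have hxM : x ∈ M17 := M0_sub_M17 (M0_pr (hl x hx))
    have hsM : s.sum ∈ M17 := by
      apply M0_sub_M17
      exact mem_M0_iff.2 ⟨s, fun y hy => hl y (Multiset.mem_cons_of_mem hy), rfl⟩
    rcases hdec x hxM s.sum hsM hs.symm with hu | hu
    · exfalso
      have := (sunit_iff (pr_pos (hl x hx)).le).1 hu
      exact (pr_pos (hl x hx)).ne' this
    · have hs0 := (sunit_iff (M17_nonneg hsM)).1 hu
      rw [hs0, add_zero] at hs
      rw [← hs]
      exact hl x hx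
  · exfalso
    rcases eq_or_lt_of_le h1 with heq | hlt
    · -- a = 1 = 1/2 + 1/2
      have h2 : (1/2:ℚ) ∈ M17 := M0_sub_M17 (one_div_mem Nat.prime_two)
      rcases hdec (1/2) h2 (1/2) h2 (by rw [← heq]; norm_num) with hu | hu <;>
        · have := (sunit_iff (by norm_num : (0:ℚ) ≤ 1/2)).1 hu
          norm_num at this
    · -- a > 1 : pick a prime p with 1/p ≤ a - 1
      obtain ⟨p, hpge, hp⟩ := Nat.exists_infinite_primes (⌈(a-1)⁻¹⌉₊ + 1)
      have hpp : (0:ℚ) < p := by exact_mod_cast hp.pos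
      have hinv : (a-1)⁻¹ ≤ (p:ℚ) := by
        calc (a-1)⁻¹ ≤ (⌈(a-1)⁻¹⌉₊ : ℚ) := Nat.le_ceil _
        _ ≤ (p:ℚ) := by exact_mod_cast Nat.le_of_succ_le hpge
      have hle : 1/(p:ℚ) ≤ a - 1 := by
        rw [div_le_iff₀ hpp]
        have ha1 : (0:ℚ) < a - 1 := by linarith
        have := mul_le_mul_of_nonneg_left hinv ha1.le
        rwa [mul_inv_cancel₀ ha1.ne'] at this
      have hxM : (1/(p:ℚ)) ∈ M17 := M0_sub_M17 (one_div_mem hp)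
      have hyG : a - 1/(p:ℚ) ∈ G17 := G_sub_M0 hG (one_div_mem hp)
      have hyM : a - 1/(p:ℚ) ∈ M17 := G_ge1_mem hyG (by linarith)
      rcases hdec (1/(p:ℚ)) hxM (a - 1/(p:ℚ)) hyM (by ring) with hu | hu
      · have := (sunit_iff (by positivity : (0:ℚ) ≤ 1/(p:ℚ))).1 hu
        have : (0:ℚ) < 1/(p:ℚ) := by positivity
        simp_all
      · have := (sunit_iff (by linarith : (0:ℚ) ≤ a - 1/(p:ℚ))).1 hu
        have h1p : (0:ℚ) < 1/(p:ℚ) := by positivity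
        linarith

lemma M0_atomicElem {x : ℚ} (hx : x ∈ M017) : SAtomicElem M17 x := by
  obtain ⟨l, hl, hs⟩ := mem_M0_iff.1 hx
  right
  refine ⟨l, ?_, hs⟩
  intro y hy
  obtain ⟨p, hp, rfl⟩ := hl y hy
  exact atom_one_div hp






lemma one_div_inj' {p q : ℕ} (hp : p.Prime) (hq : q.Prime) (h : (1:ℚ)/p = 1/q) : p = q := by
  have h1 := one_div_prime_den hp
  rw [h, one_div_prime_den hq] at h1
  exact h1.symm

/-- Lists of k distinct primes all above a bound. -/
lemma exists_primes (k d : ℕ) : ∃ L : List ℕ,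
    L.length = k ∧ L.Pairwise (· < ·) ∧ ∀ p ∈ L, p.Prime ∧ d < p := by
  induction k generalizing d with
  | zero => exact ⟨[], rfl, List.Pairwise.nil, by simp⟩
  | succ k ih =>
      obtain ⟨p, hpge, hp⟩ := Nat.exists_infinite_primes (d+1)
      obtain ⟨L, hlen, hpw, hmem⟩ := ih p
      refine ⟨p :: L, by simp [hlen], ?_, ?_⟩
      · exact List.Pairwise.cons (fun q hq => (hmem q hq).2) hpw
      · intro q hq
        rcases List.mem_cons.1 hq with rfl | hq
        · exact ⟨hp, by omega⟩
        · exact ⟨(hmem q hq).1, by have := (hmem q hq).2; omega⟩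

/-- lower bound on the sum of a multiset of prime reciprocals with prescribed counts -/
lemma sum_lower (L : List ℕ) (hLn : L.Nodup) (hLp : ∀ p ∈ L, p.Prime) :
    ∀ l : Multiset ℚ, (∀ y ∈ l, 0 ≤ y) →
    (∀ p ∈ L, (p - 1 : ℕ) ≤ l.count (1/(p:ℚ))) →
    (L.map fr).sum ≤ l.sum := by
  induction L with
  | nil =>
      intro l hl _
      simpa using Multiset.sum_nonneg hl
  | cons p L' ih =>
      intro l hl hcount
      have hp : p.Prime := hLp p (List.mem_cons_self)
      have hrep : Multiset.replicate (p-1) (1/(p:ℚ)) ≤ l :=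
        Multiset.le_count_iff_replicate_le.1 (hcount p (List.mem_cons_self))
      obtain ⟨t, ht⟩ := Multiset.le_iff_exists_add.1 hrep
      have hps : (0:ℚ) < p := by exact_mod_cast hp.pos
      have hsum_t : l.sum = fr p + t.sum := by
        rw [ht, Multiset.sum_add, Multiset.sum_replicate, nsmul_eq_mul]
        have h1 : ((p-1 : ℕ) : ℚ) = (p:ℚ) - 1 := by
          push_cast [Nat.cast_sub hp.one_lt.le]; ring
        rw [h1, fr]
        field_simp
      have htn : ∀ y ∈ t, 0 ≤ y := by
        intro y hy
        exact hl y (by rw [ht]; exact Multiset.mem_add.2 (Or.inr hy))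
      have htc : ∀ q ∈ L', (q - 1 : ℕ) ≤ t.count (1/(q:ℚ)) := by
        intro q hq
        have hq' : q.Prime := hLp q (List.mem_cons_of_mem p hq)
        have hne : (1:ℚ)/(p:ℚ) ≠ 1/(q:ℚ) := by
          intro h
          have : p = q := one_div_inj' hp hq' h
          exact (List.nodup_cons.1 hLn).1 (this ▸ hq)
        have hc := hcount q (List.mem_cons_of_mem p hq)
        rw [ht, Multiset.count_add, Multiset.count_replicate] at hc
        rw [if_neg] at hc
        · simpa using hc
        · exact fun h => hne (by rw [h])
      have hih := ih ((List.nodup_cons.1 hLn).2)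
        (fun q hq => hLp q (List.mem_cons_of_mem p hq)) t htn htc
      rw [List.map_cons, List.sum_cons, hsum_t]
      exact add_le_add_right hih _





lemma not_nearly : ¬ ∃ b ∈ M17, ∀ c ∈ M17, c ≠ 0 → SAtomicElem M17 (b + c) := by
  rintro ⟨b, hb, hmain⟩
  have hb0 : 0 ≤ b := M17_nonneg hb
  set m : ℕ := ⌈b⌉₊ + 1 with hm
  have hbm : b < m := by
    have h1 := Nat.le_ceil b
    have h2 : ((⌈b⌉₊ : ℚ)) < m := by rw [hm]; push_cast; linarith
    linarith
  obtain ⟨L, hlen, hpw, hLmem⟩ := exists_primes (2*m+2) b.den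
  have hLp : ∀ p ∈ L, p.Prime := fun p hp => (hLmem p hp).1
  have hLn : L.Nodup := hpw.imp ne_of_lt
  set s : ℚ := (L.map fr).sum with hs
  have hs_mem : s ∈ M017 := by
    apply AddSubmonoid.list_sum_mem
    intro x hx
    obtain ⟨p, hpL, rfl⟩ := List.mem_map.1 hx
    exact sub_one_div_mem (hLp p hpL)
  have hs_ge : (m:ℚ) + 1 ≤ s := by
    have hhalf : ∀ x ∈ L.map fr, (1/2:ℚ) ≤ x := by
      intro x hx
      obtain ⟨p, hpL, rfl⟩ := List.mem_map.1 hx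
      have hp2 : (2:ℚ) ≤ p := by exact_mod_cast (hLp p hpL).two_le
      have hppos : (0:ℚ) < p := by linarith
      have : 1/(p:ℚ) ≤ 1/2 := by
        apply div_le_div_of_nonneg_left <;> linarith
      rw [fr]; linarith
    have := List.card_nsmul_le_sum (L.map fr) (1/2:ℚ) hhalf
    rw [List.length_map, hlen, nsmul_eq_mul] at this
    have h3 : ((2*m+2 : ℕ):ℚ) * (1/2) = (m:ℚ) + 1 := by push_cast; ring
    rw [h3] at this
    rw [hs]
    exact this
  set c : ℚ := s - m with hc
  have hc1 : 1 ≤ c := by rw [hc]; linarith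
  have hcM : c ∈ M17 := G_ge1_mem (G_of hs_mem (M0_nat m)) hc1
  have hbc_pos : 0 < b + c := by linarith
  rcases hmain c hcM (by linarith) with hu | ⟨l, hlat, hsum⟩
  · rw [sunit_iff hbc_pos.le] at hu; linarith
  · have hl : ∀ y ∈ l, y ∈ PR := fun y hy => atom_mem_pr (hlat y hy)
    have hl0 : ∀ y ∈ l, 0 ≤ y := fun y hy => (pr_pos (hl y hy)).le
    have hcount : ∀ p ∈ L, (p - 1 : ℕ) ≤ l.count (1/(p:ℚ)) := by
      intro p hpL
      have hp := hLp p hpL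
      have hp2 : (2:ℤ) ≤ p := by exact_mod_cast hp.two_le
      have hp0 : (p:ℚ) ≠ 0 := by exact_mod_cast hp.pos.ne'
      have hpden : b.den < p := (hLmem p hpL).2
      -- split s
      set w : ℚ := ((L.erase p).map fr).sum with hw
      have hs_split : s = fr p + w := by
        rw [hs, hw]
        have hperm : (L.map fr).Perm ((p :: L.erase p).map fr) :=
          (List.perm_cons_erase hpL).map fr
        rw [hperm.sum_eq, List.map_cons, List.sum_cons]
      set n : ℕ := l.count (1/(p:ℚ)) with hn
      set r : ℚ := (l.filter (fun y => ¬ y = (1/(p:ℚ)))).sum with hr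
      have key : b + c = (n:ℚ) * (1/(p:ℚ)) + r := by
        rw [← hsum]; exact count_smul_rest l _
      -- the residual R
      have hRden : ¬ p ∣ (b + w - (m:ℚ) - r).den := by
        have hbden : ¬ p ∣ b.den := by
          intro h
          exact absurd (Nat.le_of_dvd b.pos h) (by omega)
        have hwden : ¬ p ∣ w.den := by
          rw [hw, ← Multiset.sum_coe, ← Multiset.map_coe]
          apply den_sum_not_dvd hp
          intro x hx
          obtain ⟨q, hqL, rfl⟩ := Multiset.mem_map.1 hx
          rw [Multiset.mem_coe] at hqL
          obtain ⟨hqne, hqL'⟩ := (List.Nodup.mem_erase_iff hLn).1 hqL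
          have hq := hLp q hqL'
          have : fr q = 1 + (-(1/(q:ℚ))) := by rw [fr]; ring
          rw [this]
          apply den_add_not_dvd hp
          · rw [Rat.den_one]; exact fun h => absurd (Nat.le_of_dvd one_pos h) (by omega)
          · rw [Rat.den_neg_eq_den, one_div_prime_den hq]
            intro h
            exact hqne ((Nat.prime_dvd_prime_iff_eq hp hq).1 h).symm
        have hmden : ¬ p ∣ ((m:ℚ)).den := by
          rw [Rat.den_natCast]
          exact fun h => absurd (Nat.le_of_dvd one_pos h) (by omega)
        have hrden : ¬ p ∣ r.den := rest_den_not_dvd hp hl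
        have e : b + w - (m:ℚ) - r = ((b + w) + (-(m:ℚ))) + (-r) := by ring
        rw [e]
        apply den_add_not_dvd hp
        · apply den_add_not_dvd hp (den_add_not_dvd hp hbden hwden)
          rwa [Rat.den_neg_eq_den]
        · rwa [Rat.den_neg_eq_den]
      -- the integer equation
      have hz : (((n:ℤ) + 1 - p : ℤ) : ℚ) = (b + w - (m:ℚ) - r) * p := by
        have e0 : (n:ℚ) * (1/(p:ℚ)) = b + w - (m:ℚ) - r + 1 - 1/(p:ℚ) := by
          have : c = (1 - 1/(p:ℚ)) + w - m := by rw [hc, hs_split, fr]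
          rw [this] at key
          linarith
        have e1 : (n:ℚ) = (b + w - (m:ℚ) - r + 1 - 1/(p:ℚ)) * p := by
          rw [← e0]; field_simp
        push_cast
        rw [e1]
        field_simp
        push_cast
        ring
      obtain ⟨j, hj⟩ := prime_dvd_of_eq hp hRden hz
      have hn0 : (0:ℤ) ≤ (n:ℤ) := Int.natCast_nonneg n
      have hint : (p:ℤ) - 1 ≤ (n:ℤ) := by
        rcases le_or_gt 0 j with hj0 | hj0
        · have : 0 ≤ (p:ℤ) * j := mul_nonneg (by linarith) hj0
          linarith [hj ▸ this]
        · have hj1 : j ≤ -1 := by omega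
          have : (p:ℤ) * j ≤ (p:ℤ) * (-1) :=
            mul_le_mul_of_nonneg_left hj1 (by linarith)
          have h2 : (n:ℤ) + 1 - p ≤ -p := by rw [hj]; linarith
          linarith
      have : ((p:ℤ) - 1).toNat ≤ n := by omega
      omega
    have hlow := sum_lower L hLn hLp l hl0 hcount
    rw [hsum] at hlow
    rw [← hs] at hlow
    have : (m:ℚ) ≤ b := by rw [hc] at hlow; linarith
    linarith


end Aux17

/-- The Puiseux monoid `M = M₀ ∪ G_{≥1}`, where `M₀ = ⟨1/p : p prime⟩` and `G` is
its difference group, is an additive submonoid of `ℚ_{≥0}` whose set of atoms is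
`{1/p : p prime}`; it is almost atomic but not nearly atomic. -/
theorem almost_atomic_not_nearly_atomic :
    ((0 : ℚ) ∈ M17 ∧ (∀ x ∈ M17, ∀ y ∈ M17, x + y ∈ M17) ∧ ∀ x ∈ M17, (0 : ℚ) ≤ x) ∧
    {a : ℚ | SAtom M17 a} = {x : ℚ | ∃ p : ℕ, p.Prime ∧ x = 1 / p} ∧
    (∀ c ∈ M17, c ≠ 0 →
      ∃ b ∈ M17, SAtomicElem M17 b ∧ SAtomicElem M17 (b + c)) ∧
    ¬ ∃ b ∈ M17, ∀ c ∈ M17, c ≠ 0 → SAtomicElem M17 (b + c) := by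
  refine ⟨⟨Aux17.M17_zero, fun x hx y hy => Aux17.M17_add hx hy,
    fun x hx => Aux17.M17_nonneg hx⟩, ?_, ?_, Aux17.not_nearly⟩
  · ext a
    constructor
    · exact fun h => Aux17.atom_mem_pr h
    · rintro ⟨p, hp, rfl⟩
      exact Aux17.atom_one_div hp
  · intro c hc hc0
    rcases hc with hcM0 | ⟨hcG, hc1⟩
    · exact ⟨0, Aux17.M17_zero, Or.inl Aux17.sunit_zero,
        by rw [zero_add]; exact Aux17.M0_atomicElem hcM0⟩
    · obtain ⟨u, hu, v, hv, rfl⟩ := hcG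
      exact ⟨v, Aux17.M0_sub_M17 hv, Aux17.M0_atomicElem hv,
        by rw [show v + (u - v) = u by ring]; exact Aux17.M0_atomicElem hu⟩
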